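/- Let t ≥ 2 be an integer, let m ≥ 4 be even, let M be a perfect matching of K_m, and let w_1, w_2, w_3, w_4 be four distinct vertices of K_m with {w_1, w_2} ∈ M and {w_3, w_4} ∈ M. Then the t-subdivided prism G of K_m has a Hamiltonian cycle T such that: (i) for every {a,b} ∈ M the bottom edge (u_a^1, u_b^1) belongs to E(T); (ii) every vertical edge of G belongs to E(T); and (iii) the top edge (u_{w_1}^t, u_{w_3}^t) belongs to E(T). -/

import Mathlib

open SimpleGraph Finset

attribute [local instance] Classical.propDecidable

/-- An edge `e` crosses the vertex set `S` if it has an endpoint in `S`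
and an endpoint outside `S`. -/
def crossing {V : Type*} (S : Finset V) (e : Sym2 V) : Prop :=
  (∃ a ∈ e, a ∈ S) ∧ (∃ a ∈ e, a ∉ S)

/-- A comb with handle `H` and teeth `T 0, …, T (k-1)`. -/
def IsComb {V : Type*} [Fintype V] [DecidableEq V]
    (H : Finset V) {k : ℕ} (T : Fin k → Finset V) : Prop :=
  3 ≤ k ∧ Odd k ∧
  (∀ i j, i ≠ j → Disjoint (T i) (T j)) ∧
  (∀ i, (H ∩ T i).Nonempty) ∧
  (H \ Finset.univ.biUnion T).Nonempty

/-- An `(h,t)`-uniform comb: every tooth has size `t` and meets the handle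
in exactly `h` vertices. -/
def IsUniformComb {V : Type*} [Fintype V] [DecidableEq V] (h t : ℕ)
    (H : Finset V) {k : ℕ} (T : Fin k → Finset V) : Prop :=
  IsComb H T ∧ ∀ i, (T i).card = t ∧ (H ∩ T i).card = h

/-- The `t`-subdivided prism over `K_m`: vertex `(i, j)` is the copy of
vertex `i` in layer `j` (layer `0` is the bottom, layer `t-1` the top).
There are complete graphs on the bottom and top layers, and vertical paths
joining consecutive layers in each column. -/
def subPrism (m t : ℕ) : SimpleGraph (Fin m × Fin t) :=
  SimpleGraph.fromRel (fun p q =>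
    (p.2.val = 0 ∧ q.2.val = 0 ∧ p.1 ≠ q.1) ∨
    (p.2.val = t - 1 ∧ q.2.val = t - 1 ∧ p.1 ≠ q.1) ∨
    (p.1 = q.1 ∧ p.2.val + 1 = q.2.val))

/-- A perfect matching of `K_m`, given as a set of (non-loop) edges such that
every vertex belongs to exactly one of them. -/
def IsPerfectMatchingKm (m : ℕ) (M : Finset (Sym2 (Fin m))) : Prop :=
  (∀ e ∈ M, ¬ e.IsDiag) ∧ ∀ v : Fin m, ∃! e, e ∈ M ∧ v ∈ e

namespace TourAux
open List


variable {V : Type*} {G : SimpleGraph V}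

def chainWalk (G : SimpleGraph V) : (v : V) → (l : List V) → List.Chain G.Adj v l → G.Walk v (l.getLastD v)
  | _, [], _ => Walk.nil
  | _, a :: l, h =>
      Walk.cons (List.chain_cons.mp h).1
        ((chainWalk G a l (show List.Chain G.Adj a l from (List.chain_cons.mp h).2)).copy rfl (List.getLastD_cons (b := a) (l := l)).symm)

@[simp] lemma support_chainWalk : ∀ (v : V) (l : List V) (h : List.Chain G.Adj v l),
    (chainWalk G v l h).support = v :: l
  | v, [], _ => rfl
  | v, a :: l, h => by
      rw [chainWalk, Walk.support_cons, Walk.support_copy, support_chainWalk]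

@[simp] lemma edges_chainWalk : ∀ (v : V) (l : List V) (h : List.Chain G.Adj v l),
    (chainWalk G v l h).edges = List.zipWith (fun a b => s(a, b)) (v :: l) l
  | v, [], _ => rfl
  | v, a :: l, h => by
      rw [chainWalk, Walk.edges_cons, Walk.edges_copy, edges_chainWalk]
      rfl

lemma mem_zipWith_of_infix : ∀ {L : List V} {a b : V}, [a, b] <:+: L →
    s(a, b) ∈ List.zipWith (fun a b => s(a, b)) L L.tail
  | [], a, b, h => by
      exfalso; simpa using h.length_le
  | x :: L, a, b, h => by
      rcases List.infix_cons_iff.mp h with h' | h'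
      · clear h
        rw [List.cons_prefix_cons] at h'
        obtain ⟨rfl, h'⟩ := h'
        obtain ⟨L', rfl⟩ := h'
        simp
      · clear h
        cases L with
        | nil => exfalso; simpa using h'.length_le
        | cons y L =>
          have := mem_zipWith_of_infix h'
          simp only [List.tail_cons] at this ⊢
          cases L with
          | nil => exfalso; simpa using h'.length_le
          | cons z L => exact List.mem_cons_of_mem _ this

lemma infix_of_mem_zipWith : ∀ {L : List V} {a b : V},
    s(a, b) ∈ List.zipWith (fun a b => s(a, b)) L L.tail →
    [a, b] <:+: L ∨ [b, a] <:+: L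
  | [], a, b, h => by simp at h
  | [x], a, b, h => by simp at h
  | x :: y :: L, a, b, h => by
      simp only [List.tail_cons, List.zipWith_cons_cons, List.mem_cons] at h
      rcases h with h | h
      · rcases (Sym2.mk_eq_mk_iff (p := (x, y)) (q := (a, b))).mp h.symm with h | h <;>
          rw [Prod.ext_iff] at h <;> obtain ⟨rfl, rfl⟩ := h
        · exact Or.inl ⟨[], L, rfl⟩
        · exact Or.inr ⟨[], L, rfl⟩
      · rcases infix_of_mem_zipWith (L := y :: L) h with h | h
        · exact Or.inl (h.trans (List.infix_cons (List.infix_refl _)))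
        · exact Or.inr (h.trans (List.infix_cons (List.infix_refl _)))



lemma junction_infix {l₁ l₂ : List α} {a b : α}
    (h₁ : l₁.getLast? = some a) (h₂ : l₂.head? = some b) : [a, b] <:+: l₁ ++ l₂ := by
  have e₁ : l₁.dropLast ++ [a] = l₁ := List.dropLast_append_getLast? a h₁
  have e₂ : b :: l₂.tail = l₂ := by
    cases l₂ with
    | nil => simp at h₂
    | cons c l' => simp only [List.head?_cons, Option.some.injEq] at h₂; simp [h₂]
  refine ⟨l₁.dropLast, l₂.tail, ?_⟩
  rw [← e₁, ← e₂]; simp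

lemma infix_append_right' {l l₁ l₂ : List α} (h : l <:+: l₂) : l <:+: l₁ ++ l₂ :=
  h.trans ⟨l₁, [], by simp⟩

lemma infix_append_left' {l l₁ l₂ : List α} (h : l <:+: l₁) : l <:+: l₁ ++ l₂ :=
  h.trans ⟨[], l₂, by simp⟩


lemma last_not_inner {v a : V} (s t : List V) (hnd : (s ++ v :: a :: t).Nodup)
    (hl : (s ++ v :: a :: t).getLast? = some v) : False := by
  have h1 : (v :: a :: t).getLast? = some (t.getLastD a) := by
    rw [List.getLast?_cons (a := v), List.getLast?_cons (a := a), List.getLastD_eq_getLast?]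
    simp
  have h2 : (s ++ v :: a :: t).getLast? = some (t.getLastD a) := by
    rw [List.getLast?_append, h1]; simp
  have h3 : t.getLastD a = v := by rw [h2] at hl; exact Option.some.inj hl
  have h4 : v ∈ a :: t := h3 ▸ List.getLastD_mem_cons (l := t) (a := a)
  have h5 : (v :: a :: t).Nodup := (List.sublist_append_right s _).nodup hnd
  exact (List.nodup_cons.mp h5).1 h4

lemma last_self_nil {v : V} (t : List V) (hnd : (v :: t).Nodup)
    (hl : (v :: t).getLast? = some v) : t = [] := by
  cases t with
  | nil => rfl
  | cons a t' =>
    exfalso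
    have h1 : (v :: a :: t').getLast? = some (t'.getLastD a) := by
      rw [List.getLast?_cons (a := v), List.getLast?_cons (a := a), List.getLastD_eq_getLast?]
      simp
    have h3 : t'.getLastD a = v := by rw [h1] at hl; exact Option.some.inj hl
    have h4 : v ∈ a :: t' := h3 ▸ List.getLastD_mem_cons (l := t') (a := a)
    exact (List.nodup_cons.mp hnd).1 h4

lemma build_hamCycle [DecidableEq V] (v x : V) (l : List V) (hadj : G.Adj v x)
    (hch : List.Chain G.Adj x l) (hlast : l.getLastD x = v)
    (hnd : (x :: l).Nodup) (hcov : ∀ a : V, a ∈ x :: l)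
    (hlen : 3 ≤ l.length) :
    ∃ C : G.Walk v v, C.IsHamiltonianCycle ∧
      C.edges = List.zipWith (fun a b => s(a, b)) (v :: x :: l) (x :: l) := by
  have hxl : x ∉ l := (List.nodup_cons.mp hnd).1
  have hlast? : (x :: l).getLast? = some v := by
    rw [List.getLast?_cons]
    rw [List.getLastD_eq_getLast?] at hlast
    exact congrArg some hlast
  set P : G.Walk x v := (chainWalk G x l hch).copy rfl hlast with hP
  have hsupP : P.support = x :: l := by rw [hP, Walk.support_copy, support_chainWalk]
  have hedgP : P.edges = List.zipWith (fun a b => s(a, b)) (x :: l) l := by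
    rw [hP, Walk.edges_copy, edges_chainWalk]
  have hpath : P.IsPath := Walk.IsPath.mk' (by rw [hsupP]; exact hnd)
  have hne : s(v, x) ∉ P.edges := by
    intro hmem
    rw [hedgP] at hmem
    have h2 : [v, x] <:+: x :: l ∨ [x, v] <:+: x :: l := by
      have := infix_of_mem_zipWith (L := x :: l) (a := v) (b := x)
      simpa using this hmem
    rcases h2 with ⟨s, t, hst⟩ | ⟨s, t, hst⟩
    · have hst' : s ++ v :: x :: t = x :: l := by simpa [List.append_assoc] using hst
      exact last_not_inner s t (hst' ▸ hnd) (hst' ▸ hlast?)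
    · have hst' : s ++ x :: v :: t = x :: l := by simpa [List.append_assoc] using hst
      cases s with
      | nil =>
        simp only [List.nil_append, List.cons.injEq] at hst'
        obtain ⟨-, hl⟩ := hst'
        subst hl
        have := last_self_nil (v := v) t (List.nodup_cons.mp hnd).2
          (by
            rw [List.getLast?_cons (a := x)] at hlast?
            have : (v :: t).getLast? = some ((v :: t).getLast?.getD x) := by
              rw [List.getLast?_cons]; simp
            rw [this]; exact hlast?)
        subst this
        simp at hlen
      | cons y s' =>
        simp only [List.cons_append, List.cons.injEq] at hst'
        obtain ⟨rfl, hl⟩ := hst'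
        exact hxl (hl ▸ (by simp : y ∈ s' ++ y :: v :: t))
  have hcyc : (Walk.cons hadj P).IsCycle := Path.cons_isCycle ⟨P, hpath⟩ hadj hne
  refine ⟨Walk.cons hadj P, ?_, ?_⟩
  · rw [Walk.isHamiltonianCycle_iff_isCycle_and_support_count_tail_eq_one]
    refine ⟨hcyc, fun a => ?_⟩
    rw [Walk.support_cons, List.tail_cons, hsupP]
    exact List.count_eq_one_of_mem hnd (hcov a)
  · rw [Walk.edges_cons, hedgP]
    rfl




variable {m t : ℕ}

lemma adj_vert {c : Fin m} {i j : Fin t} (h : (j : ℕ) = (i : ℕ) + 1) :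
    (subPrism m t).Adj (c, i) (c, j) := by
  rw [subPrism, SimpleGraph.fromRel_adj]
  refine ⟨fun hc => ?_, Or.inl (Or.inr (Or.inr ⟨rfl, by simpa using h.symm⟩))⟩
  have := congrArg Prod.snd hc
  simp only [Fin.ext_iff] at this
  omega

lemma adj_bot {a b : Fin m} (h : a ≠ b) {i j : Fin t} (hi : (i : ℕ) = 0) (hj : (j : ℕ) = 0) :
    (subPrism m t).Adj (a, i) (b, j) := by
  rw [subPrism, SimpleGraph.fromRel_adj]
  exact ⟨by simp [Prod.ext_iff]; intro hc; exact absurd hc h, Or.inl (Or.inl ⟨hi, hj, h⟩)⟩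

lemma adj_top {a b : Fin m} (h : a ≠ b) {i j : Fin t} (hi : (i : ℕ) = t - 1) (hj : (j : ℕ) = t - 1) :
    (subPrism m t).Adj (a, i) (b, j) := by
  rw [subPrism, SimpleGraph.fromRel_adj]
  exact ⟨by simp [Prod.ext_iff]; intro hc; exact absurd hc h, Or.inl (Or.inr (Or.inl ⟨hi, hj, h⟩))⟩

/-- descending column segment from level `j` to level `0`. -/
def dcol (m t : ℕ) (c : Fin m) : (j : ℕ) → j < t → List (Fin m × Fin t)
  | 0, h => [(c, ⟨0, h⟩)]
  | j + 1, h => (c, ⟨j + 1, h⟩) :: dcol m t c j (by omega)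

lemma mem_dcol {c : Fin m} : ∀ {j : ℕ} (h : j < t) {p : Fin m × Fin t},
    p ∈ dcol m t c j h ↔ p.1 = c ∧ (p.2 : ℕ) ≤ j
  | 0, h, p => by
      simp only [dcol, List.mem_singleton]
      constructor
      · rintro rfl; simp
      · rintro ⟨h1, h2⟩
        ext <;> simp [h1]; omega
  | j + 1, h, p => by
      simp only [dcol, List.mem_cons, mem_dcol]
      constructor
      · rintro (rfl | ⟨h1, h2⟩) <;> simp_all <;> omega
      · rintro ⟨h1, h2⟩
        rcases Nat.lt_or_ge (p.2 : ℕ) (j + 1) with h3 | h3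
        · exact Or.inr ⟨h1, by omega⟩
        · left; ext <;> simp [h1] <;> omega

lemma nodup_dcol {c : Fin m} : ∀ {j : ℕ} (h : j < t), (dcol m t c j h).Nodup
  | 0, h => by simp [dcol]
  | j + 1, h => by
      simp only [dcol, List.nodup_cons]
      exact ⟨fun hc => absurd ((mem_dcol _).mp hc).2 (by simp), nodup_dcol _⟩

lemma head?_dcol {c : Fin m} : ∀ {j : ℕ} (h : j < t),
    (dcol m t c j h).head? = some (c, ⟨j, h⟩)
  | 0, h => rfl
  | j + 1, h => rfl

lemma getLast?_dcol {c : Fin m} : ∀ {j : ℕ} (h : j < t),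
    (dcol m t c j h).getLast? = some (c, ⟨0, by omega⟩)
  | 0, h => rfl
  | j + 1, h => by
      rw [dcol, List.getLast?_cons, getLast?_dcol (by omega : j < t)]
      simp

lemma chain'_dcol {c : Fin m} : ∀ {j : ℕ} (h : j < t), List.Chain' (subPrism m t).Adj (dcol m t c j h)
  | 0, h => by simp [dcol]; exact List.isChain_singleton _
  | j + 1, h => by
      rw [dcol]
      refine List.isChain_cons.mpr ⟨?_, chain'_dcol (by omega)⟩
      intro y hy
      rw [head?_dcol] at hy
      cases hy
      exact ((adj_vert (by simp)).symm : (subPrism m t).Adj (c, ⟨j+1, h⟩) (c, ⟨j, _⟩))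

lemma vert_infix_dcol {c : Fin m} {i : ℕ} : ∀ {j : ℕ} (h : j < t) (hij : i + 1 ≤ j),
    [(c, ⟨i + 1, by omega⟩), (c, ⟨i, by omega⟩)] <:+: dcol m t c j h
  | 0, h, hij => by omega
  | j + 1, h, hij => by
      rcases Nat.eq_or_lt_of_le hij with heq | hlt
      · rcases heq with heq
        have hi : i = j := by omega
        subst hi
        refine ⟨[], (dcol m t c i (by omega)).tail, ?_⟩
        have : dcol m t c i (by omega) = (c, ⟨i, by omega⟩) :: (dcol m t c i (by omega)).tail := by
          cases i <;> rfl
        simp only [List.nil_append, dcol]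
        rw [this]
        rfl
      · exact (vert_infix_dcol (c := c) (by omega : j < t) (by omega : i + 1 ≤ j)).trans
          ⟨[(c, ⟨j + 1, h⟩)], [], by simp [dcol]⟩







noncomputable def upc (m t : ℕ) (ht : 0 < t) (c : Fin m) : List (Fin m × Fin t) :=
  (dcol m t c (t - 1) (by omega)).reverse

noncomputable def tourTail (m t : ℕ) (htp : 0 < t) (b₁ : Fin m) : Fin m → List (Fin m × Fin m) → List (Fin m × Fin t)
  | x, [] => upc m t htp x ++ dcol m t b₁ (t - 1) (by omega)
  | x, p :: r => (upc m t htp x ++ dcol m t p.1 (t - 1) (by omega)) ++ tourTail m t htp b₁ p.2 r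


variable {m t : ℕ}

variable (ht : 0 < t)

lemma mem_upc {c : Fin m} {p : Fin m × Fin t} : p ∈ upc m t ht c ↔ p.1 = c := by
  rw [upc, List.mem_reverse, mem_dcol]
  have := p.2.isLt
  constructor
  · exact fun h => h.1
  · exact fun h => ⟨h, by omega⟩

lemma mem_dcol' {c : Fin m} {h : t - 1 < t} {p : Fin m × Fin t} : p ∈ dcol m t c (t-1) h ↔ p.1 = c := by
  rw [mem_dcol]
  have := p.2.isLt
  exact ⟨fun h => h.1, fun h => ⟨h, by omega⟩⟩

lemma nodup_upc {c : Fin m} : (upc m t ht c).Nodup := by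
  rw [upc, List.nodup_reverse]; exact nodup_dcol _

lemma head?_upc {c : Fin m} : (upc m t ht c).head? = some (c, ⟨0, ht⟩) := by
  rw [upc, List.head?_reverse, getLast?_dcol]

lemma getLast?_upc {c : Fin m} : (upc m t ht c).getLast? = some (c, ⟨t - 1, by omega⟩) := by
  rw [upc, List.getLast?_reverse, head?_dcol]

lemma chain'_upc {c : Fin m} : List.Chain' (subPrism m t).Adj (upc m t ht c) := by
  rw [upc]; apply List.isChain_reverse.mpr
  exact List.IsChain.imp (fun a b h => h.symm) (chain'_dcol _)

lemma vert_infix_upc {c : Fin m} {i : ℕ} (hij : i + 1 ≤ t - 1) :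
    [(c, ⟨i, by omega⟩), (c, ⟨i + 1, by omega⟩)] <:+: upc m t ht c := by
  rw [upc, ← List.reverse_infix]
  simpa using vert_infix_dcol (c := c) (i := i) (by omega) hij

/-- the tail of the tour: starts at `(x,0)`, goes up column `x`, then for each
pair `(b,c)` alternately down column `b`... ending going down column `b₁`. -/
def colList (b₁ x : Fin m) (r : List (Fin m × Fin m)) : List (Fin m) :=
  x :: (r.flatMap (fun p => [p.1, p.2]) ++ [b₁])

lemma colList_cons (b₁ x : Fin m) (p : Fin m × Fin m) (r : List (Fin m × Fin m)) :
    colList b₁ x (p :: r) = x :: p.1 :: colList b₁ p.2 r := by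
  simp [colList]

lemma mem_tourTail {b₁ : Fin m} (r : List (Fin m × Fin m)) : ∀ (x : Fin m) {q : Fin m × Fin t},
    q ∈ tourTail m t ht b₁ x r ↔ q.1 ∈ colList b₁ x r := by
  induction r with
  | nil => intro x q; simp only [tourTail, colList, List.mem_append, mem_upc ht, mem_dcol', List.mem_cons]; tauto
  | cons p r ih =>
      intro x q
      simp only [tourTail, List.mem_append, mem_upc ht, mem_dcol', ih p.2, colList_cons, List.mem_cons]; tauto

lemma nodup_tourTail {b₁ : Fin m} (r : List (Fin m × Fin m)) : ∀ (x : Fin m),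
    (colList b₁ x r).Nodup → (tourTail m t ht b₁ x r).Nodup := by
  induction r with
  | nil =>
      intro x hnd
      rw [show tourTail m t ht b₁ x [] = upc m t ht x ++ dcol m t b₁ (t - 1) (by omega) from rfl]
      refine (nodup_upc ht).append (nodup_dcol _) ?_
      intro q hq hq'
      rw [mem_upc ht] at hq
      rw [mem_dcol'] at hq'
      simp [colList] at hnd
      exact hnd (hq ▸ hq'.symm ▸ rfl)
  | cons p r ih =>
      intro x hnd
      rw [colList_cons, List.nodup_cons, List.nodup_cons] at hnd
      obtain ⟨hx, hp1, hnd⟩ := hnd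
      rw [show tourTail m t ht b₁ x (p :: r) =
        (upc m t ht x ++ dcol m t p.1 (t - 1) (by omega)) ++ tourTail m t ht b₁ p.2 r from rfl]
      refine List.Nodup.append (List.Nodup.append (nodup_upc ht) (nodup_dcol _) ?_) (ih p.2 hnd) ?_
      · intro q hq hq'
        rw [mem_upc ht] at hq
        rw [mem_dcol'] at hq'
        exact hx (by rw [← hq, hq']; exact List.mem_cons_self)
      · intro q hq hq'
        rw [mem_tourTail ht] at hq'
        rcases List.mem_append.mp hq with h | h
        · rw [mem_upc ht] at h
          exact hx (by rw [← h]; exact List.mem_cons_of_mem _ hq')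
        · rw [mem_dcol'] at h
          exact hp1 (h ▸ hq')

lemma head?_tourTail {b₁ : Fin m} (r : List (Fin m × Fin m)) (x : Fin m) :
    (tourTail m t ht b₁ x r).head? = some (x, ⟨0, ht⟩) := by
  cases r with
  | nil =>
      rw [show tourTail m t ht b₁ x [] = upc m t ht x ++ dcol m t b₁ (t - 1) (by omega) from rfl,
        List.head?_append, head?_upc]
      rfl
  | cons p r =>
      rw [show tourTail m t ht b₁ x (p :: r) =
        (upc m t ht x ++ dcol m t p.1 (t - 1) (by omega)) ++ tourTail m t ht b₁ p.2 r from rfl,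
        List.head?_append, List.head?_append, head?_upc]
      rfl

lemma getLast?_tourTail {b₁ : Fin m} (r : List (Fin m × Fin m)) : ∀ (x : Fin m),
    (tourTail m t ht b₁ x r).getLast? = some (b₁, ⟨0, ht⟩) := by
  induction r with
  | nil =>
      intro x
      rw [show tourTail m t ht b₁ x [] = upc m t ht x ++ dcol m t b₁ (t - 1) (by omega) from rfl,
        List.getLast?_append, getLast?_dcol]
      rfl
  | cons p r ih =>
      intro x
      rw [show tourTail m t ht b₁ x (p :: r) =
        (upc m t ht x ++ dcol m t p.1 (t - 1) (by omega)) ++ tourTail m t ht b₁ p.2 r from rfl,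
        List.getLast?_append, ih p.2]
      rfl

lemma chain'_tourTail {b₁ : Fin m} (r : List (Fin m × Fin m)) : ∀ (x : Fin m),
    List.Chain' Ne (colList b₁ x r) → List.Chain' (subPrism m t).Adj (tourTail m t ht b₁ x r) := by
  induction r with
  | nil =>
      intro x hch
      rw [show tourTail m t ht b₁ x [] = upc m t ht x ++ dcol m t b₁ (t - 1) (by omega) from rfl]
      refine (chain'_upc ht).append (chain'_dcol _) ?_
      intro a ha b hb
      rw [getLast?_upc] at ha
      rw [head?_dcol] at hb
      cases ha; cases hb
      have hxb : x ≠ b₁ := by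
        simp [colList] at hch; exact List.isChain_pair.mp hch
      exact adj_top hxb rfl rfl
  | cons p r ih =>
      intro x hch
      rw [colList_cons] at hch
      have h1 : x ≠ p.1 := (List.isChain_cons_cons.mp hch).1
      have hch2 : List.Chain' Ne (p.1 :: colList b₁ p.2 r) := (List.isChain_cons_cons.mp hch).2
      have h2 : p.1 ≠ p.2 ∨ True := Or.inr trivial
      have hch3 : List.Chain' Ne (colList b₁ p.2 r) := (List.isChain_cons_cons.mp hch2).2
      have h3 : p.1 ≠ p.2 := by
        have := (List.isChain_cons_cons.mp hch2).1
        simpa [colList] using this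
      rw [show tourTail m t ht b₁ x (p :: r) =
        (upc m t ht x ++ dcol m t p.1 (t - 1) (by omega)) ++ tourTail m t ht b₁ p.2 r from rfl]
      refine List.IsChain.append (List.IsChain.append (chain'_upc ht) (chain'_dcol _) ?_)
        (ih p.2 hch3) ?_
      · intro a ha b hb
        rw [getLast?_upc] at ha
        rw [head?_dcol] at hb
        cases ha; cases hb
        exact adj_top h1 rfl rfl
      · intro a ha b hb
        rw [List.getLast?_append, getLast?_dcol] at ha
        rw [head?_tourTail] at hb
        simp only [Option.or_some, Option.some_or, Option.mem_def, Option.some.injEq] at ha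
        cases ha; cases hb
        exact adj_bot h3 rfl rfl




variable {m t : ℕ} (ht : 0 < t)

lemma col_infix {b₁ : Fin m} {h : t - 1 < t} (r : List (Fin m × Fin m)) : ∀ (x : Fin m) (c : Fin m),
    c ∈ colList b₁ x r →
    upc m t ht c <:+: tourTail m t ht b₁ x r ∨ dcol m t c (t - 1) h <:+: tourTail m t ht b₁ x r := by
  induction r with
  | nil =>
      intro x c hc
      simp [colList] at hc
      rcases hc with rfl | rfl
      · exact Or.inl (infix_append_left' (List.infix_refl _))
      · exact Or.inr (infix_append_right' (List.infix_refl _))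
  | cons p r ih =>
      intro x c hc
      rw [colList_cons] at hc
      rw [show tourTail m t ht b₁ x (p :: r) =
        (upc m t ht x ++ dcol m t p.1 (t - 1) (by omega)) ++ tourTail m t ht b₁ p.2 r from rfl]
      rcases List.mem_cons.mp hc with rfl | hc
      · exact Or.inl (infix_append_left' (infix_append_left' (List.infix_refl _)))
      rcases List.mem_cons.mp hc with rfl | hc
      · exact Or.inr (infix_append_left' (infix_append_right' (List.infix_refl _)))
      · rcases ih p.2 c hc with h' | h'
        · exact Or.inl (infix_append_right' h')
        · exact Or.inr (infix_append_right' h')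

lemma bot_infix {b₁ : Fin m} (r : List (Fin m × Fin m)) : ∀ (x : Fin m) (p : Fin m × Fin m),
    p ∈ r → [(p.1, (⟨0, ht⟩ : Fin t)), (p.2, ⟨0, ht⟩)] <:+: tourTail m t ht b₁ x r := by
  induction r with
  | nil => intro x p hp; simp at hp
  | cons q r ih =>
      intro x p hp
      rw [show tourTail m t ht b₁ x (q :: r) =
        (upc m t ht x ++ dcol m t q.1 (t - 1) (by omega)) ++ tourTail m t ht b₁ q.2 r from rfl]
      rcases List.mem_cons.mp hp with rfl | hp
      · refine junction_infix ?_ ?_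
        · rw [List.getLast?_append, getLast?_dcol]; rfl
        · rw [head?_tourTail]
      · exact infix_append_right' (ih q.2 p hp)

lemma top_infix {b₁ : Fin m} (r : List (Fin m × Fin m)) (x : Fin m) (p : Fin m × Fin m) :
    [(x, (⟨t - 1, by omega⟩ : Fin t)), (p.1, ⟨t - 1, by omega⟩)] <:+: tourTail m t ht b₁ x (p :: r) := by
  rw [show tourTail m t ht b₁ x (p :: r) =
    (upc m t ht x ++ dcol m t p.1 (t - 1) (by omega)) ++ tourTail m t ht b₁ p.2 r from rfl]
  refine infix_append_left' (junction_infix ?_ ?_)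
  · rw [getLast?_upc]
  · rw [head?_dcol]




end TourAux

theorem tour_from_matching (t m : ℕ) (ht : 2 ≤ t) (hm : 4 ≤ m) (hme : Even m)
    (M : Finset (Sym2 (Fin m))) (hM : IsPerfectMatchingKm m M)
    (w₁ w₂ w₃ w₄ : Fin m)
    (hdist : w₁ ≠ w₂ ∧ w₁ ≠ w₃ ∧ w₁ ≠ w₄ ∧ w₂ ≠ w₃ ∧ w₂ ≠ w₄ ∧ w₃ ≠ w₄)
    (h12 : s(w₁, w₂) ∈ M) (h34 : s(w₃, w₄) ∈ M) :
    ∃ (v : Fin m × Fin t) (C : (subPrism m t).Walk v v),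
      C.IsHamiltonianCycle ∧
      (∀ a b : Fin m, s(a, b) ∈ M →
        s(((a, ⟨0, by omega⟩) : Fin m × Fin t), (b, ⟨0, by omega⟩)) ∈ C.edges) ∧
      (∀ (i : Fin m) (j : ℕ) (hj : j + 1 < t),
        s(((i, ⟨j, by omega⟩) : Fin m × Fin t), (i, ⟨j + 1, hj⟩)) ∈ C.edges) ∧
      s(((w₁, ⟨t - 1, by omega⟩) : Fin m × Fin t), (w₃, ⟨t - 1, by omega⟩)) ∈ C.edges := by
  classical
  obtain ⟨hd12, hd13, hd14, hd23, hd24, hd34⟩ := hdist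
  obtain ⟨hMd, hMu⟩ := hM
  have ht0 : 0 < t := by omega
  set R : Finset (Sym2 (Fin m)) := (M.erase s(w₁, w₂)).erase s(w₃, w₄) with hRdef
  set restP : List (Fin m × Fin m) := R.toList.map Quot.out with hrestPdef
  set r : List (Fin m × Fin m) := (w₃, w₄) :: restP with hrdef
  set pairList : List (Fin m × Fin m) := (w₂, w₁) :: r with hpairListdef
  have mk_out : ∀ e : Sym2 (Fin m), s((Quot.out e).1, (Quot.out e).2) = e := by
    intro e
    show Sym2.mk (Quot.out e).1 (Quot.out e).2 = e
    rw [Sym2.mk]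
    exact e.out_eq
  have hPM : ∀ p ∈ pairList, s(p.1, p.2) ∈ M := by
    intro p hp
    rw [hpairListdef] at hp
    rcases List.mem_cons.mp hp with rfl | hp
    · rwa [Sym2.eq_swap]
    rw [hrdef] at hp
    rcases List.mem_cons.mp hp with rfl | hp
    · exact h34
    · rw [hrestPdef] at hp
      obtain ⟨e, he, rfl⟩ := List.mem_map.mp hp
      rw [mk_out]
      have heR : e ∈ R := Finset.mem_toList.mp he
      rw [hRdef] at heR
      exact Finset.mem_of_mem_erase (Finset.mem_of_mem_erase heR)
  have hmapP : pairList.map (fun p => s(p.1, p.2)) = s(w₂, w₁) :: s(w₃, w₄) :: R.toList := by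
    rw [hpairListdef, hrdef, hrestPdef]
    simp only [List.map_cons, List.map_map]
    congr 2
    exact (List.map_congr_left (g := id) (fun e _ => mk_out e)).trans (List.map_id _)
  have hndE : (pairList.map (fun p => s(p.1, p.2))).Nodup := by
    rw [hmapP]
    refine List.nodup_cons.mpr ⟨?_, List.nodup_cons.mpr ⟨?_, Finset.nodup_toList R⟩⟩
    · intro h
      rcases List.mem_cons.mp h with h | h
      · replace h := (Sym2.mk_eq_mk_iff (p := (w₂, w₁)) (q := (w₃, w₄))).mp h
        rcases h with h | h <;> rw [Prod.ext_iff] at h <;> simp at h <;> tauto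
      · have hmem := Finset.mem_toList.mp h
        rw [hRdef] at hmem
        have h2 := Finset.mem_of_mem_erase hmem
        rw [Sym2.eq_swap] at h2
        exact (Finset.mem_erase.mp h2).1 rfl
    · intro h
      have hmem := Finset.mem_toList.mp h
      rw [hRdef] at hmem
      exact (Finset.mem_erase.mp hmem).1 rfl
  have hsurj : ∀ e ∈ M, ∃ p ∈ pairList, s(p.1, p.2) = e := by
    intro e he
    by_cases h1 : e = s(w₁, w₂)
    · exact ⟨(w₂, w₁), by rw [hpairListdef]; exact List.mem_cons_self,
        by rw [Sym2.eq_swap]; exact h1.symm⟩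
    by_cases h2 : e = s(w₃, w₄)
    · exact ⟨(w₃, w₄), by rw [hpairListdef, hrdef]; simp, h2.symm⟩
    · have heR : e ∈ R := by
        rw [hRdef]
        exact Finset.mem_erase.mpr ⟨h2, Finset.mem_erase.mpr ⟨h1, he⟩⟩
      refine ⟨Quot.out e, ?_, mk_out e⟩
      rw [hpairListdef, hrdef, hrestPdef]
      exact List.mem_cons_of_mem _ (List.mem_cons_of_mem _
        (List.mem_map.mpr ⟨e, Finset.mem_toList.mpr heR, rfl⟩))
  set cols : List (Fin m) := pairList.flatMap (fun p => [p.1, p.2]) with hcolsdef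
  have hcolsnd : cols.Nodup := by
    rw [hcolsdef, List.nodup_flatMap]
    constructor
    · intro p hp
      have hdiag := hMd _ (hPM p hp)
      rw [Sym2.isDiag_iff_proj_eq] at hdiag
      simp [hdiag]
    · have h1 : List.Pairwise (fun p q : Fin m × Fin m => s(p.1, p.2) ≠ s(q.1, q.2)) pairList :=
        List.pairwise_map.mp hndE
      refine h1.imp_of_mem ?_
      intro p q hp hq hne
      show List.Disjoint _ _
      intro v hv hv'
      simp only [List.mem_cons, List.mem_singleton, List.not_mem_nil, or_false] at hv hv'
      have hvp : v ∈ s(p.1, p.2) := by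
        rcases hv with rfl | rfl
        · exact Sym2.mem_mk_left _ _
        · exact Sym2.mem_mk_right _ _
      have hvq : v ∈ s(q.1, q.2) := by
        rcases hv' with rfl | rfl
        · exact Sym2.mem_mk_left _ _
        · exact Sym2.mem_mk_right _ _
      obtain ⟨e, he, hu⟩ := hMu v
      exact hne ((hu _ ⟨hPM p hp, hvp⟩).trans (hu _ ⟨hPM q hq, hvq⟩).symm)
  have hcolscov : ∀ v : Fin m, v ∈ cols := by
    intro v
    obtain ⟨e, ⟨heM, hve⟩, -⟩ := hMu v
    obtain ⟨p, hp, hpe⟩ := hsurj e heM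
    rw [← hpe, Sym2.mem_iff] at hve
    rw [hcolsdef]
    exact List.mem_flatMap.mpr ⟨p, hp, by rcases hve with rfl | rfl <;> simp⟩
  have hcols_eq : cols = w₂ :: w₁ :: r.flatMap (fun p => [p.1, p.2]) := by
    rw [hcolsdef, hpairListdef]
    simp
  set CL : List (Fin m) := TourAux.colList w₂ w₁ r with hCLdef
  have hCL : CL = (w₁ :: r.flatMap (fun p => [p.1, p.2])) ++ [w₂] := by
    rw [hCLdef, TourAux.colList]
    simp
  have hCLnd : CL.Nodup := by
    rw [hCL]
    have h := hcolsnd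
    rw [hcols_eq, List.nodup_cons] at h
    refine List.Nodup.append h.2 (List.nodup_singleton _) ?_
    intro a ha hb
    simp only [List.mem_singleton] at hb
    subst hb
    exact h.1 ha
  have hCLcov : ∀ c : Fin m, c ∈ CL := by
    intro c
    have hc := hcolscov c
    rw [hcols_eq] at hc
    rw [hCL]
    simp only [List.mem_cons] at hc
    simp only [List.mem_append, List.mem_cons, List.mem_singleton]
    tauto
  have hCLchain : List.Chain' Ne CL := List.Pairwise.isChain hCLnd
  set TL : List (Fin m × Fin t) := TourAux.tourTail m t ht0 w₂ w₁ r with hTLdef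
  have hTLnd : TL.Nodup := TourAux.nodup_tourTail ht0 r w₁ hCLnd
  have hTLcov : ∀ q : Fin m × Fin t, q ∈ TL := fun q =>
    (TourAux.mem_tourTail ht0 r w₁).mpr (hCLcov q.1)
  have hTLch : List.Chain' (subPrism m t).Adj TL := TourAux.chain'_tourTail ht0 r w₁ hCLchain
  have hTLhd : TL.head? = some (w₁, ⟨0, ht0⟩) := TourAux.head?_tourTail ht0 r w₁
  have hTLlast : TL.getLast? = some (w₂, ⟨0, ht0⟩) := TourAux.getLast?_tourTail ht0 r w₁
  set v₀ : Fin m × Fin t := (w₂, ⟨0, ht0⟩) with hv₀def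
  set x₀ : Fin m × Fin t := (w₁, ⟨0, ht0⟩) with hx₀def
  have hTLc : x₀ :: TL.tail = TL := List.cons_head?_tail (Option.mem_def.mpr hTLhd)
  have hlen8 : 8 ≤ m * t := le_trans (by norm_num) (Nat.mul_le_mul hm ht)
  have hcardTL : TL.toFinset = Finset.univ :=
    Finset.eq_univ_iff_forall.mpr (fun q => List.mem_toFinset.mpr (hTLcov q))
  have hlenTL : m * t ≤ TL.length := by
    have hle := List.toFinset_card_le TL
    rw [hcardTL] at hle
    simpa [Finset.card_univ] using hle
  have hlen3 : 3 ≤ TL.tail.length := by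
    have hlt : TL.length = TL.tail.length + 1 := by
      rw [← hTLc]; simp
    omega
  have hch : List.Chain (subPrism m t).Adj x₀ TL.tail := by
    have h := hTLch
    rw [← hTLc] at h
    exact h
  have hlastD : TL.tail.getLastD x₀ = v₀ := by
    have h := hTLlast
    rw [← hTLc, List.getLast?_cons] at h
    rw [List.getLastD_eq_getLast?]
    exact Option.some.inj h
  have hadj : (subPrism m t).Adj v₀ x₀ := TourAux.adj_bot (Ne.symm hd12) rfl rfl
  have hnd' : (x₀ :: TL.tail).Nodup := by rw [hTLc]; exact hTLnd
  have hcov' : ∀ a : Fin m × Fin t, a ∈ x₀ :: TL.tail := by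
    intro a; rw [hTLc]; exact hTLcov a
  obtain ⟨C, hham, hedg⟩ :=
    TourAux.build_hamCycle v₀ x₀ TL.tail hadj hch hlastD hnd' hcov' hlen3
  rw [show v₀ :: x₀ :: TL.tail = v₀ :: TL by rw [hTLc],
      show x₀ :: TL.tail = TL from hTLc] at hedg
  have hedge_of_infix : ∀ a b : Fin m × Fin t, [a, b] <:+: v₀ :: TL → s(a, b) ∈ C.edges := by
    intro a b hinf
    rw [hedg]
    exact TourAux.mem_zipWith_of_infix (L := v₀ :: TL) hinf
  refine ⟨v₀, C, hham, ?_, ?_, ?_⟩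
  · intro a b hab
    obtain ⟨p, hp, hpe⟩ := hsurj _ hab
    have hkey : s((p.1, (⟨0, ht0⟩ : Fin t)), (p.2, ⟨0, ht0⟩)) ∈ C.edges := by
      rw [hpairListdef] at hp
      rcases List.mem_cons.mp hp with rfl | hp'
      · exact hedge_of_infix _ _ ⟨[], TL.tail, by rw [← hTLc]; rfl⟩
      · have hb := TourAux.bot_infix (b₁ := w₂) ht0 r w₁ p hp'
        rw [← hTLdef] at hb
        exact hedge_of_infix _ _ (TourAux.infix_append_right' (l₁ := [v₀]) hb)
    rcases (Sym2.mk_eq_mk_iff (p := p) (q := (a, b))).mp hpe with h | h <;> rw [Prod.ext_iff] at h <;>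
      obtain ⟨h1, h2⟩ := h <;> simp -failIfUnchanged only [Prod.swap] at h1 h2 <;> subst h1 <;> subst h2
    · exact hkey
    · rw [Sym2.eq_swap]; exact hkey
  · intro c j hj
    have hcol := hCLcov c
    rw [hCLdef] at hcol
    rcases TourAux.col_infix ht0 (h := by omega) r w₁ c hcol with hup | hdn
    · have hv := TourAux.vert_infix_upc ht0 (c := c) (i := j) (by omega)
      rw [← hTLdef] at hup
      exact hedge_of_infix _ _ (TourAux.infix_append_right' (l₁ := [v₀]) (hv.trans hup))
    · have hv := TourAux.vert_infix_dcol (c := c) (i := j) (by omega : t - 1 < t) (by omega)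
      rw [← hTLdef] at hdn
      have hmem := hedge_of_infix _ _ (TourAux.infix_append_right' (l₁ := [v₀]) (hv.trans hdn))
      rw [Sym2.eq_swap] at hmem
      exact hmem
  · have htop := @TourAux.top_infix 0 m t ht0 w₂ restP w₁ (w₃, w₄)
    rw [← hrdef, ← hTLdef] at htop
    exact hedge_of_infix _ _ (TourAux.infix_append_right' (l₁ := [v₀]) htop)
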